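/- Let M be a nonempty set, G, L : M → ℝ with L ≥ L₀ > 0 and G bounded, h : M → ℝ bounded with 0 ≤ h(ρ)/L(ρ) ≤ D for all ρ and some constant D. Define α₁ := inf over families {ν_q} (images of the temperature construction) of -G(ν_q)/L(ν_q), and suppose for each q ≥ 0 the Legendre relation -T(q) = inf_ρ (h(ρ) + q G(ρ))/(-L(ρ)) holds with -T(q) = -VD(ν_q) + q α(q) ≥ -D + q α₁. Then α₁ ≤ inf_{ρ ∈ M} (-G(ρ)/L(ρ)); combined with α₁ ≥ inf_{ρ} (-G(ρ)/L(ρ)) by definition, α₁ = inf_{ρ ∈ M} (-G(ρ)/L(ρ)). -/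

import Mathlib

open Filter Topology Set

/-- Boundary value of the spectrum: with `L ≥ L₀ > 0`, `G` and `h` bounded,
`0 ≤ h ρ / L ρ ≤ D`, `α₁ = inf_q α q` where `α q = -G (ν_q) / L (ν_q)`, and the
Legendre relation `-T q = inf_ρ (h ρ + q G ρ) / (-(L ρ))` with
`-T q = -(h (ν_q) / L (ν_q)) + q * α q ≥ -D + q * α₁` for `q ≥ 0`, one has
`α₁ = inf_ρ (-G ρ / L ρ)`. -/
theorem alpha_one_eq_inf {M : Type*} [Nonempty M]
    (h G L : M → ℝ) (L₀ D Cg Ch : ℝ)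
    (hL₀ : 0 < L₀) (hL : ∀ ρ : M, L₀ ≤ L ρ)
    (hG : ∀ ρ : M, |G ρ| ≤ Cg) (hh : ∀ ρ : M, |h ρ| ≤ Ch)
    (hD : ∀ ρ : M, 0 ≤ h ρ / L ρ ∧ h ρ / L ρ ≤ D)
    (νq : ℝ → M) (α T : ℝ → ℝ)
    (hα : ∀ q : ℝ, α q = -G (νq q) / L (νq q))
    (α₁ : ℝ) (hα₁ : α₁ = ⨅ q : ℝ, α q)
    (hT : ∀ q : ℝ, IsGLB (Set.range fun ρ : M => (h ρ + q * G ρ) / (-(L ρ))) (-(T q)))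
    (hTq : ∀ q : ℝ, -(T q) = -(h (νq q) / L (νq q)) + q * α q)
    (hTbound : ∀ q : ℝ, 0 ≤ q → -D + q * α₁ ≤ -(T q)) :
    α₁ = ⨅ ρ : M, -G ρ / L ρ := by
  have hLpos : ∀ ρ : M, 0 < L ρ := fun ρ => hL₀.trans_le (hL ρ)
  have hCg : 0 ≤ Cg := (abs_nonneg _).trans (hG (Classical.arbitrary M))
  have hD0 : 0 ≤ D := le_trans (hD (Classical.arbitrary M)).1 (hD (Classical.arbitrary M)).2
  have bdd : BddBelow (Set.range fun ρ : M => -G ρ / L ρ) := by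
    refine ⟨-(Cg / L₀), ?_⟩
    rintro _ ⟨ρ, rfl⟩
    have h1 : -Cg ≤ -G ρ := by have := (abs_le.mp (hG ρ)).2; linarith
    have h2 := hL ρ
    show -(Cg / L₀) ≤ -G ρ / L ρ
    rw [neg_div, neg_le_neg_iff, div_le_div_iff₀ (hLpos ρ) hL₀]
    nlinarith [hLpos ρ]
  -- key inequality: for every ρ and q ≥ 0, q * α₁ ≤ D + q * (-G ρ / L ρ)
  have key : ∀ (ρ : M) (q : ℝ), 0 ≤ q → q * α₁ ≤ D + q * (-G ρ / L ρ) := by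
    intro ρ q hq
    have hlb := (hT q).1 (Set.mem_range_self ρ)
    have hb := hTbound q hq
    have hLρ := (hLpos ρ).ne'
    have hid : (h ρ + q * G ρ) / (-(L ρ)) = -(h ρ / L ρ) + q * (-G ρ / L ρ) := by
      rw [div_neg, eq_comm, neg_add_eq_iff_eq_add]
      field_simp
      ring
    have hnn := (hD ρ).1
    rw [hid] at hlb
    linarith
  have hle : ∀ ρ : M, α₁ ≤ -G ρ / L ρ := by
    intro ρ
    by_contra hc
    push_neg at hc
    set c := α₁ - (-G ρ / L ρ) with hc'
    have hcpos : 0 < c := by simp [hc']; linarith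
    have := key ρ ((D + 1) / c) (by positivity)
    have h2 : (D + 1) / c * c = D + 1 := div_mul_cancel₀ _ hcpos.ne'
    nlinarith
  refine le_antisymm (le_ciInf hle) ?_
  rw [hα₁]
  refine le_ciInf fun q => ?_
  rw [hα]
  exact ciInf_le bdd (νq q)
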